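/- One-dimensionality of the deficiency space on the half-line in the subcritical range (core of Proposition 3.4(iii)): Let α ∈ (−1/2, 1/2). Consider the set S of continuously differentiable functions f = (f₁,f₂) : (0,∞) → ℂ² with ∫₀^∞ |f(x)|²_{ℂ²} dx < ∞ satisfying f₂'(x) + (α/x) f₂(x) = i f₁(x) and −f₁'(x) + (α/x) f₁(x) = i f₂(x) for all x > 0. Then S is a one-dimensional complex vector space: S contains a nonzero element, and any two elements of S are linearly dependent over ℂ. -/

import Mathlib

open MeasureTheory Real Set

noncomputable section

/-- Membership in the deficiency space `S = ker(T_α − i)` of the maximal operator associated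
with `τ_α` on `L²((0,∞); ℂ²)`: `f = (f₁,f₂)` is continuously differentiable on `(0,∞)`,
square-integrable, and solves `τ_α f = i f` there. -/
def MemDeficiency (α : ℝ) (f₁ f₂ : ℝ → ℂ) : Prop :=
  ContDiffOn ℝ 1 f₁ (Ioi 0) ∧ ContDiffOn ℝ 1 f₂ (Ioi 0)
    ∧ IntegrableOn (fun x => ‖f₁ x‖ ^ 2 + ‖f₂ x‖ ^ 2) (Ioi 0)
    ∧ ∀ x ∈ Ioi (0 : ℝ),
        deriv f₂ x + ((α / x : ℝ) : ℂ) * f₂ x = Complex.I * f₁ x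
        ∧ -deriv f₁ x + ((α / x : ℝ) : ℂ) * f₁ x = Complex.I * f₂ x


lemma sq_le_cosh (t : ℝ) : t ^ 2 / 8 ≤ Real.cosh t := by
  rw [← Real.cosh_abs, ← sq_abs]
  set s := |t| with hs
  have hs0 : 0 ≤ s := abs_nonneg t
  have h3 : s / 2 ≤ Real.exp (s / 2) := by nlinarith [Real.add_one_le_exp (s / 2)]
  have h4 : Real.exp (s/2) * Real.exp (s/2) = Real.exp s := by rw [← Real.exp_add]; ring_nf
  have h2 : s ^ 2 / 4 ≤ Real.exp s := by nlinarith [Real.exp_pos (s/2)]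
  have := Real.cosh_eq s
  nlinarith [Real.exp_pos (-s)]

/-- Master integrability: `exp (c*t - x*cosh t)` is integrable on `(0,∞)` for `x > 0`. -/
lemma int_exp_cosh (x c : ℝ) (hx : 0 < x) :
    IntegrableOn (fun t => Real.exp (c * t - x * Real.cosh t)) (Ioi 0) := by
  set b := x / 8 with hbdef
  have hb : (0:ℝ) < b := by positivity
  have key : ∀ t : ℝ, c * t - b * t ^ 2 = c ^ 2 / (4 * b) + (-b * (t - c / (2 * b)) ^ 2) := by
    intro t; field_simp; ring
  have hbound : Integrable (fun t : ℝ =>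
      Real.exp (c ^ 2 / (4 * b)) * Real.exp (-b * (t - c / (2 * b)) ^ 2)) := by
    exact ((integrable_exp_neg_mul_sq hb).comp_sub_right (c / (2 * b))).const_mul _
  refine (hbound.mono ?_ ?_).integrableOn
  · exact (Real.continuous_exp.comp (by continuity)).aestronglyMeasurable
  · filter_upwards with t
    rw [Real.norm_eq_abs, Real.norm_eq_abs, abs_of_nonneg (Real.exp_pos _).le, ← Real.exp_add,
      abs_of_nonneg (Real.exp_pos _).le, ← key t]
    apply Real.exp_le_exp.2
    have h1 := sq_le_cosh t
    nlinarith

lemma cosh_le_exp_abs (y : ℝ) : Real.cosh y ≤ Real.exp |y| := by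
  rw [Real.cosh_eq]
  rcases le_total y 0 with h | h
  · rw [abs_of_nonpos h]
    have := Real.exp_le_exp.2 (show y ≤ -y by linarith)
    linarith
  · rw [abs_of_nonneg h]
    have := Real.exp_le_exp.2 (show -y ≤ y by linarith)
    linarith

lemma int_dom (x : ℝ) {f : ℝ → ℝ} (hf : AEStronglyMeasurable f (volume.restrict (Ioi 0)))
    (c : ℝ) (hx : 0 < x) (hb : ∀ t ∈ Ioi (0:ℝ), ‖f t‖ ≤ Real.exp (c * t - x * Real.cosh t)) :
    IntegrableOn f (Ioi 0) :=
  (int_exp_cosh x c hx).mono' hf ((ae_restrict_iff' measurableSet_Ioi).2 (ae_of_all _ hb))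

/-- The Bessel-type kernel integral `∫₀^∞ e^{-x cosh t} cosh (ν t) dt`. -/
def gk (ν x : ℝ) : ℝ := ∫ t in Ioi (0:ℝ), Real.exp (-x * Real.cosh t) * Real.cosh (ν * t)

lemma gk_integrand_bound (ν x : ℝ) : ∀ t ∈ Ioi (0:ℝ),
    ‖Real.exp (-x * Real.cosh t) * Real.cosh (ν * t)‖ ≤ Real.exp (|ν| * t - x * Real.cosh t) := by
  intro t ht
  rw [norm_mul, Real.norm_eq_abs, Real.norm_eq_abs, abs_of_nonneg (Real.exp_pos _).le,
    abs_of_nonneg (Real.cosh_pos (x := ν * t)).le]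
  have h1 : Real.cosh (ν * t) ≤ Real.exp (|ν| * t) := by
    calc Real.cosh (ν * t) ≤ Real.exp |ν * t| := cosh_le_exp_abs _
      _ = Real.exp (|ν| * t) := by rw [abs_mul, abs_of_nonneg (show (0:ℝ) ≤ t from le_of_lt ht)]
  calc Real.exp (-x * Real.cosh t) * Real.cosh (ν * t)
      ≤ Real.exp (-x * Real.cosh t) * Real.exp (|ν| * t) := by
        exact mul_le_mul_of_nonneg_left h1 (Real.exp_pos _).le
    _ = Real.exp (|ν| * t - x * Real.cosh t) := by rw [← Real.exp_add]; ring_nf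

lemma gk_integrable (ν x : ℝ) (hx : 0 < x) :
    IntegrableOn (fun t => Real.exp (-x * Real.cosh t) * Real.cosh (ν * t)) (Ioi 0) :=
  int_dom x ((Real.continuous_exp.comp (by continuity)).mul
    (Real.continuous_cosh.comp (by continuity))).aestronglyMeasurable |ν| hx
    (gk_integrand_bound ν x)

lemma gk_pos (ν x : ℝ) (hx : 0 < x) : 0 < gk ν x := by
  refine (setIntegral_pos_iff_support_of_nonneg_ae ?_ (gk_integrable ν x hx)).2 ?_
  · refine (ae_restrict_iff' measurableSet_Ioi).2 (ae_of_all _ fun t _ => ?_)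
    positivity
  · have hsupp : (Function.support fun t => Real.exp (-x * Real.cosh t) * Real.cosh (ν * t))
        = univ := by
      ext t; simp only [Function.mem_support, mem_univ, iff_true]
      positivity
    rw [hsupp, univ_inter]
    simp

lemma gk_nonneg (ν x : ℝ) (hx : 0 < x) : 0 ≤ gk ν x := (gk_pos ν x hx).le

lemma int_dom' (x : ℝ) {f : ℝ → ℝ} (hf : AEStronglyMeasurable f (volume.restrict (Ioi 0)))
    (c A : ℝ) (hx : 0 < x)
    (hb : ∀ t ∈ Ioi (0:ℝ), ‖f t‖ ≤ A * Real.exp (c * t - x * Real.cosh t)) :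
    IntegrableOn f (Ioi 0) :=
  ((int_exp_cosh x c hx).const_mul A).mono' hf
    ((ae_restrict_iff' measurableSet_Ioi).2 (ae_of_all _ hb))

lemma abs_sinh_le (ν t : ℝ) (ht : 0 ≤ t) : |Real.sinh (ν * t)| ≤ Real.exp (|ν| * t) := by
  rw [Real.abs_sinh]
  calc Real.sinh |ν * t| ≤ Real.cosh |ν * t| := by
        nlinarith [Real.cosh_sq (|ν * t|), Real.cosh_pos (x := |ν*t|), Real.sinh_nonneg_iff.2 (abs_nonneg (ν*t))]
    _ ≤ Real.exp |(|ν * t|)| := cosh_le_exp_abs _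
    _ = Real.exp (|ν| * t) := by rw [abs_abs, abs_mul, abs_of_nonneg ht]

lemma cosh_le_exp' (ν t : ℝ) (ht : 0 ≤ t) : Real.cosh (ν * t) ≤ Real.exp (|ν| * t) := by
  calc Real.cosh (ν * t) ≤ Real.exp |ν * t| := cosh_le_exp_abs _
    _ = Real.exp (|ν| * t) := by rw [abs_mul, abs_of_nonneg ht]

/-- Integration by parts identity: `ν ∫ E cosh(νt) = x ∫ E sinh t sinh(νt)`. -/
lemma gk_ibp (ν x : ℝ) (hx : 0 < x) :
    ν * gk ν x
      = x * ∫ t in Ioi (0:ℝ), Real.exp (-x * Real.cosh t) * (Real.sinh t * Real.sinh (ν * t)) := by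
  set E : ℝ → ℝ := fun t => Real.exp (-x * Real.cosh t) with hE
  set D : ℝ → ℝ := fun t =>
    E t * (ν * Real.cosh (ν * t) - x * Real.sinh t * Real.sinh (ν * t)) with hD
  have hEcont : Continuous E := Real.continuous_exp.comp (by continuity)
  have hDcont : Continuous D := by
    apply hEcont.mul
    continuity
  have hderiv : ∀ t ∈ Ici (0:ℝ),
      HasDerivAt (fun t => E t * Real.sinh (ν * t)) (D t) t := by
    intro t _
    have h1 : HasDerivAt (fun t : ℝ => -x * Real.cosh t) (-x * Real.sinh t) t :=
      (Real.hasDerivAt_cosh t).const_mul (-x)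
    have h2 : HasDerivAt E (Real.exp (-x * Real.cosh t) * (-x * Real.sinh t)) t := h1.exp
    have h3 : HasDerivAt (fun t : ℝ => Real.sinh (ν * t)) (Real.cosh (ν * t) * ν) t := by
      have := (Real.hasDerivAt_sinh (ν * t)).comp t ((hasDerivAt_id t).const_mul ν)
      exact this.congr_deriv (by simp)
    have := h2.mul h3
    refine this.congr_deriv ?_
    simp only [hD, hE]
    ring
  have hDint : IntegrableOn D (Ioi 0) := by
    apply int_dom' x hDcont.aestronglyMeasurable (1 + |ν|) (|ν| + x) hx
    intro t ht
    have ht' : (0:ℝ) ≤ t := le_of_lt ht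
    have hE0 : ‖E t‖ = Real.exp (-x * Real.cosh t) := by
      rw [Real.norm_eq_abs, abs_of_nonneg (Real.exp_pos _).le]
    have hcosh1 : Real.cosh (ν * t) ≤ Real.exp (|ν| * t) := cosh_le_exp' ν t ht'
    have hsinh1 : |Real.sinh (ν * t)| ≤ Real.exp (|ν| * t) := abs_sinh_le ν t ht'
    have hsinht : |Real.sinh t| ≤ Real.exp t := by simpa using abs_sinh_le 1 t ht'
    rw [hD, norm_mul, hE0]
    have hb1 : ‖ν * Real.cosh (ν * t) - x * Real.sinh t * Real.sinh (ν * t)‖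
        ≤ (|ν| + x) * Real.exp ((1 + |ν|) * t) := by
      calc ‖ν * Real.cosh (ν * t) - x * Real.sinh t * Real.sinh (ν * t)‖
          ≤ ‖ν * Real.cosh (ν * t)‖ + ‖x * Real.sinh t * Real.sinh (ν * t)‖ := norm_sub_le _ _
        _ ≤ |ν| * Real.exp (|ν| * t) + x * (Real.exp t * Real.exp (|ν| * t)) := by
            rw [Real.norm_eq_abs, Real.norm_eq_abs, abs_mul, abs_mul, abs_mul,
              abs_of_nonneg hx.le]
            have e1 : |ν| * |Real.cosh (ν * t)| ≤ |ν| * Real.exp (|ν| * t) := by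
              rw [abs_of_nonneg (Real.cosh_pos _).le]
              exact mul_le_mul_of_nonneg_left hcosh1 (abs_nonneg _)
            have e2 : x * |Real.sinh t| * |Real.sinh (ν * t)|
                ≤ x * (Real.exp t * Real.exp (|ν| * t)) := by
              rw [mul_assoc]
              exact mul_le_mul_of_nonneg_left
                (mul_le_mul hsinht hsinh1 (abs_nonneg _) (Real.exp_pos _).le) hx.le
            linarith
        _ ≤ (|ν| + x) * Real.exp ((1 + |ν|) * t) := by
            have h4 : Real.exp (|ν| * t) ≤ Real.exp ((1 + |ν|) * t) := by
              apply Real.exp_le_exp.2; nlinarith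
            have h5 : Real.exp t * Real.exp (|ν| * t) = Real.exp ((1 + |ν|) * t) := by
              rw [← Real.exp_add]; ring_nf
            nlinarith [Real.exp_pos ((1 + |ν|) * t), abs_nonneg ν]
    calc Real.exp (-x * Real.cosh t) * ‖ν * Real.cosh (ν * t) - x * Real.sinh t * Real.sinh (ν * t)‖
        ≤ Real.exp (-x * Real.cosh t) * ((|ν| + x) * Real.exp ((1 + |ν|) * t)) :=
          mul_le_mul_of_nonneg_left hb1 (Real.exp_pos _).le
      _ = (|ν| + x) * Real.exp ((1 + |ν|) * t - x * Real.cosh t) := by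
          rw [mul_comm (Real.exp (-x * Real.cosh t)), mul_assoc, ← Real.exp_add]
          ring_nf
  have htend : Filter.Tendsto (fun t => E t * Real.sinh (ν * t)) Filter.atTop (nhds 0) := by
    have hgt : Filter.Tendsto (fun t : ℝ => Real.exp (|ν| * t - (x/8) * t^2))
        Filter.atTop (nhds 0) := by
      apply Real.tendsto_exp_atBot.comp
      have h1 : Filter.Tendsto (fun t : ℝ => t * (|ν| - (x/8) * t)) Filter.atTop Filter.atBot := by
        apply Filter.Tendsto.atTop_mul_atBot₀ Filter.tendsto_id
        apply Filter.tendsto_atBot_add_const_left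
        exact Filter.tendsto_neg_atBot_iff.2 (Filter.Tendsto.const_mul_atTop (by positivity) Filter.tendsto_id)
      refine h1.congr fun t => by ring
    apply squeeze_zero_norm' ?_ hgt
    · filter_upwards [Filter.eventually_ge_atTop (0:ℝ)] with t ht
      rw [norm_mul, Real.norm_eq_abs, abs_of_nonneg (Real.exp_pos _).le, Real.norm_eq_abs]
      calc Real.exp (-x * Real.cosh t) * |Real.sinh (ν * t)|
          ≤ Real.exp (-x * Real.cosh t) * Real.exp (|ν| * t) :=
            mul_le_mul_of_nonneg_left (abs_sinh_le ν t ht) (Real.exp_pos _).le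
        _ = Real.exp (|ν| * t - x * Real.cosh t) := by rw [← Real.exp_add]; ring_nf
        _ ≤ Real.exp (|ν| * t - (x/8) * t^2) := by
            apply Real.exp_le_exp.2
            have := sq_le_cosh t
            nlinarith
  have key := integral_Ioi_of_hasDerivAt_of_tendsto' hderiv hDint htend
  simp only [Real.sinh_zero, mul_zero, sub_zero] at key
  -- key : ∫ t in Ioi 0, D t = 0
  have hint1 : IntegrableOn (fun t => E t * Real.cosh (ν * t)) (Ioi 0) := gk_integrable ν x hx
  have hint2 : IntegrableOn (fun t => E t * (Real.sinh t * Real.sinh (ν * t))) (Ioi 0) := by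
    apply int_dom' x ((hEcont.mul (by continuity)).aestronglyMeasurable) (1 + |ν|) 1 hx
    intro t ht
    have ht' : (0:ℝ) ≤ t := le_of_lt ht
    rw [Pi.mul_apply, norm_mul, Real.norm_eq_abs, abs_of_nonneg (Real.exp_pos _).le, Real.norm_eq_abs, abs_mul,
      one_mul]
    calc Real.exp (-x * Real.cosh t) * (|Real.sinh t| * |Real.sinh (ν * t)|)
        ≤ Real.exp (-x * Real.cosh t) * (Real.exp t * Real.exp (|ν| * t)) := by
          apply mul_le_mul_of_nonneg_left _ (Real.exp_pos _).le
          exact mul_le_mul (by simpa using abs_sinh_le 1 t ht') (abs_sinh_le ν t ht')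
            (abs_nonneg _) (Real.exp_pos _).le
      _ = Real.exp ((1 + |ν|) * t - x * Real.cosh t) := by
          rw [← Real.exp_add, ← Real.exp_add]; ring_nf
  have hsplit : ∫ t in Ioi (0:ℝ), D t
      = ν * gk ν x - x * ∫ t in Ioi (0:ℝ), E t * (Real.sinh t * Real.sinh (ν * t)) := by
    have : ∀ t : ℝ, D t = ν * (E t * Real.cosh (ν * t))
        - x * (E t * (Real.sinh t * Real.sinh (ν * t))) := by
      intro t; simp only [hD]; ring
    rw [show (fun t => D t) = fun t => ν * (E t * Real.cosh (ν * t))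
        - x * (E t * (Real.sinh t * Real.sinh (ν * t))) from funext this]
    rw [integral_sub (hint1.const_mul ν) (hint2.const_mul x), integral_const_mul,
      integral_const_mul]
    rfl
  rw [key] at hsplit
  linarith [hsplit]

set_option maxHeartbeats 1000000 in
/-- Derivative of the kernel integral: `∂ₓ gk ν x = -(ν/x) gk ν x - gk (1-ν) x`. -/
lemma hasDerivAt_gk (ν x : ℝ) (hx : 0 < x) :
    HasDerivAt (gk ν) (-(ν / x) * gk ν x - gk (1 - ν) x) x := by
  set F : ℝ → ℝ → ℝ := fun y t => Real.exp (-y * Real.cosh t) * Real.cosh (ν * t) with hF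
  set F' : ℝ → ℝ → ℝ := fun y t =>
    -(Real.cosh t * (Real.exp (-y * Real.cosh t) * Real.cosh (ν * t))) with hF'
  have hmeas : ∀ y : ℝ, AEStronglyMeasurable (F y) (volume.restrict (Ioi 0)) := fun y =>
    ((Real.continuous_exp.comp (continuous_const.mul Real.continuous_cosh)).mul
      (Real.continuous_cosh.comp (continuous_const.mul continuous_id))).aestronglyMeasurable
  have hε : (0:ℝ) < x/2 := by linarith
  have hbound : ∀ t ∈ Ioi (0:ℝ), ∀ y ∈ Metric.ball x (x/2),
      ‖F' y t‖ ≤ Real.exp ((1 + |ν|) * t - (x/2) * Real.cosh t) := by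
    intro t ht y hy
    have ht' : (0:ℝ) ≤ t := le_of_lt ht
    have hy' : x/2 < y := by
      rw [Metric.mem_ball, Real.dist_eq, abs_lt] at hy; linarith [hy.1]
    have h1 : Real.exp (-y * Real.cosh t) ≤ Real.exp (-(x/2) * Real.cosh t) := by
      apply Real.exp_le_exp.2
      have := Real.cosh_pos (x := t)
      nlinarith
    rw [hF', norm_neg, norm_mul, norm_mul, Real.norm_eq_abs, Real.norm_eq_abs, Real.norm_eq_abs,
      abs_of_nonneg (Real.cosh_pos _).le, abs_of_nonneg (Real.exp_pos _).le,
      abs_of_nonneg (Real.cosh_pos _).le]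
    calc Real.cosh t * (Real.exp (-y * Real.cosh t) * Real.cosh (ν * t))
        ≤ Real.exp t * (Real.exp (-(x/2) * Real.cosh t) * Real.exp (|ν| * t)) := by
          apply mul_le_mul (by simpa using cosh_le_exp' 1 t ht')
            (mul_le_mul h1 (cosh_le_exp' ν t ht') (Real.cosh_pos _).le (Real.exp_pos _).le)
            (by positivity) (Real.exp_pos _).le
      _ = Real.exp ((1 + |ν|) * t - (x/2) * Real.cosh t) := by
          rw [← Real.exp_add, ← Real.exp_add]; ring_nf
  have hdiff : ∀ t ∈ Ioi (0:ℝ), ∀ y ∈ Metric.ball x (x/2), HasDerivAt (fun y => F y t) (F' y t) y := by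
    intro t _ y _
    have h1 : HasDerivAt (fun y : ℝ => -y * Real.cosh t) (-Real.cosh t) y := by
      simpa using (hasDerivAt_id y).neg.mul_const (Real.cosh t)
    have h2 := (h1.exp).mul_const (Real.cosh (ν * t))
    refine h2.congr_deriv ?_
    simp only [hF']; ring
  have key := hasDerivAt_integral_of_dominated_loc_of_deriv_le (F := F) (F' := F')
    (μ := volume.restrict (Ioi 0)) (x₀ := x)
    (bound := fun t => Real.exp ((1 + |ν|) * t - (x/2) * Real.cosh t)) (Metric.ball_mem_nhds x hε)
    (Filter.Eventually.of_forall hmeas) (gk_integrable ν x hx)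
    (((Real.continuous_cosh.mul ((Real.continuous_exp.comp
      (continuous_const.mul Real.continuous_cosh)).mul
      (Real.continuous_cosh.comp (continuous_const.mul continuous_id)))).neg).aestronglyMeasurable)
    ((ae_restrict_iff' measurableSet_Ioi).2 (ae_of_all _ hbound))
    (int_exp_cosh (x/2) (1 + |ν|) hε)
    ((ae_restrict_iff' measurableSet_Ioi).2 (ae_of_all _ hdiff))
  have hDeriv := key.2
  -- now rewrite the derivative value
  have hint2 : IntegrableOn
      (fun t => Real.exp (-x * Real.cosh t) * (Real.sinh t * Real.sinh (ν * t))) (Ioi 0) := by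
    have hc2 : Continuous fun t : ℝ => Real.sinh t * Real.sinh (ν * t) :=
      Real.continuous_sinh.mul (Real.continuous_sinh.comp (continuous_const.mul continuous_id))
    have hc1 : Continuous fun t : ℝ => Real.exp (-x * Real.cosh t) :=
      Real.continuous_exp.comp (continuous_const.mul Real.continuous_cosh)
    apply int_dom' x ((hc1.mul hc2).aestronglyMeasurable) (1 + |ν|) 1 hx
    intro t ht
    have ht' : (0:ℝ) ≤ t := le_of_lt ht
    rw [Pi.mul_apply, norm_mul, Real.norm_eq_abs, abs_of_nonneg (Real.exp_pos _).le, Real.norm_eq_abs, abs_mul,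
      one_mul]
    calc Real.exp (-x * Real.cosh t) * (|Real.sinh t| * |Real.sinh (ν * t)|)
        ≤ Real.exp (-x * Real.cosh t) * (Real.exp t * Real.exp (|ν| * t)) := by
          apply mul_le_mul_of_nonneg_left _ (Real.exp_pos _).le
          exact mul_le_mul (by simpa using abs_sinh_le 1 t ht') (abs_sinh_le ν t ht')
            (abs_nonneg _) (Real.exp_pos _).le
      _ = Real.exp ((1 + |ν|) * t - x * Real.cosh t) := by
          rw [← Real.exp_add, ← Real.exp_add]; ring_nf
  have hint3 : IntegrableOn
      (fun t => Real.exp (-x * Real.cosh t) * Real.cosh ((1 - ν) * t)) (Ioi 0) :=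
    gk_integrable (1 - ν) x hx
  have hval : ∫ t in Ioi (0:ℝ), F' x t = -(ν / x) * gk ν x - gk (1 - ν) x := by
    have hptwise : ∀ t : ℝ, F' x t
        = -(Real.exp (-x * Real.cosh t) * (Real.sinh t * Real.sinh (ν * t))
            + Real.exp (-x * Real.cosh t) * Real.cosh ((1 - ν) * t)) := by
      intro t
      have : Real.cosh ((1 - ν) * t) = Real.cosh t * Real.cosh (ν * t)
          - Real.sinh t * Real.sinh (ν * t) := by
        rw [show (1 - ν) * t = t - ν * t by ring, Real.cosh_sub]
      simp only [hF']
      rw [this]; ring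
    rw [show (fun t => F' x t) = _ from funext hptwise]
    rw [integral_neg, integral_add hint2 hint3]
    have hibp := gk_ibp ν x hx
    have : ∫ t in Ioi (0:ℝ), Real.exp (-x * Real.cosh t) * (Real.sinh t * Real.sinh (ν * t))
        = ν / x * gk ν x := by
      rw [div_mul_eq_mul_div, eq_div_iff hx.ne']
      linarith [hibp]
    rw [this]
    have : ∫ t in Ioi (0:ℝ), Real.exp (-x * Real.cosh t) * Real.cosh ((1 - ν) * t)
        = gk (1 - ν) x := rfl
    rw [this]; ring
  rw [hval] at hDeriv
  exact hDeriv

/-- The real solution components `G ν x = √x · gk ν x`. -/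
def Gf (ν : ℝ) : ℝ → ℝ := fun x => Real.sqrt x * gk ν x

lemma Gf_pos (ν x : ℝ) (hx : 0 < x) : 0 < Gf ν x :=
  mul_pos (Real.sqrt_pos.2 hx) (gk_pos ν x hx)

lemma hasDerivAt_Gf (ν x : ℝ) (hx : 0 < x) :
    HasDerivAt (Gf ν) ((1/2 - ν)/x * Gf ν x - Gf (1-ν) x) x := by
  have h1 := (Real.hasDerivAt_sqrt hx.ne').mul (hasDerivAt_gk ν x hx)
  refine h1.congr_deriv ?_
  have hs : Real.sqrt x * Real.sqrt x = x := Real.mul_self_sqrt hx.le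
  have hs0 : Real.sqrt x ≠ 0 := ne_of_gt (Real.sqrt_pos.2 hx)
  simp only [Gf]
  have h2 : 1/(2*Real.sqrt x) = Real.sqrt x / (2*x) := by
    rw [div_eq_div_iff (by positivity) (by positivity)]
    nlinarith [hs]
  rw [h2]
  field_simp
  ring

lemma exp_neg_le_rpow (u : ℝ) (hu : 0 < u) (ν' : ℝ) (h0 : 0 < ν') (h1 : ν' ≤ 1) :
    Real.exp (-u) ≤ u ^ (-ν') := by
  rw [Real.rpow_neg hu.le, Real.exp_neg]
  apply inv_anti₀ (by positivity)
  rcases le_total u 1 with h | h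
  · calc u ^ ν' ≤ 1 := Real.rpow_le_one hu.le h h0.le
      _ ≤ Real.exp u := by nlinarith [Real.add_one_le_exp u]
  · calc u ^ ν' ≤ u ^ (1:ℝ) := Real.rpow_le_rpow_of_exponent_le h h1
      _ = u := Real.rpow_one u
      _ ≤ Real.exp u := by nlinarith [Real.add_one_le_exp u]

/-- Small-`x` bound: `gk ν x ≤ (x/2)^(-ν') * K` for `ν < ν' < 1`. -/
lemma gk_le_small (ν ν' x : ℝ) (hν : 0 ≤ ν) (hνν' : ν < ν') (hν'1 : ν' ≤ 1) (hx : 0 < x) :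
    gk ν x ≤ (x/2) ^ (-ν') * ∫ t in Ioi (0:ℝ), Real.exp (-(ν' - ν) * t) := by
  have hq : IntegrableOn (fun t => (x/2) ^ (-ν') * Real.exp (-(ν' - ν) * t)) (Ioi 0) :=
    (exp_neg_integrableOn_Ioi 0 (by linarith)).const_mul _
  rw [gk, ← integral_const_mul]
  apply setIntegral_mono_on (gk_integrable ν x hx) hq measurableSet_Ioi
  intro t ht
  have ht' : (0:ℝ) ≤ t := le_of_lt ht
  have h1 : Real.cosh (ν * t) ≤ Real.exp (ν * t) := by
    calc Real.cosh (ν * t) ≤ Real.exp (|ν| * t) := cosh_le_exp' ν t ht'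
      _ = Real.exp (ν * t) := by rw [abs_of_nonneg hν]
  have h2 : Real.exp (-x * Real.cosh t) ≤ Real.exp (-(x/2 * Real.exp t)) := by
    apply Real.exp_le_exp.2
    have h3 : Real.exp t / 2 ≤ Real.cosh t := by
      rw [Real.cosh_eq]
      have := (Real.exp_pos (-t)).le
      linarith
    nlinarith
  have h4 : Real.exp (-(x/2 * Real.exp t)) ≤ (x/2 * Real.exp t) ^ (-ν') :=
    exp_neg_le_rpow _ (by positivity) ν' (by linarith) hν'1
  have h5 : (x/2 * Real.exp t) ^ (-ν') = (x/2) ^ (-ν') * Real.exp (-ν' * t) := by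
    rw [Real.mul_rpow (by positivity) (Real.exp_pos t).le, ← Real.exp_mul, mul_comm t (-ν')]
  calc Real.exp (-x * Real.cosh t) * Real.cosh (ν * t)
      ≤ (x/2 * Real.exp t) ^ (-ν') * Real.exp (ν * t) := by
        apply mul_le_mul (le_trans h2 h4) h1 (Real.cosh_pos _).le (by positivity)
    _ = (x/2) ^ (-ν') * Real.exp (-(ν' - ν) * t) := by
        rw [h5, mul_assoc, ← Real.exp_add]
        ring_nf

/-- Large-`x` bound: `gk ν x ≤ exp (1-x) * gk ν 1` for `x ≥ 1`. -/
lemma gk_le_large (ν x : ℝ) (hx : 1 ≤ x) :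
    gk ν x ≤ Real.exp (1 - x) * gk ν 1 := by
  have hq : IntegrableOn
      (fun t => Real.exp (1 - x) * (Real.exp (-1 * Real.cosh t) * Real.cosh (ν * t))) (Ioi 0) :=
    (gk_integrable ν 1 one_pos).const_mul _
  rw [gk, gk, ← integral_const_mul]
  apply setIntegral_mono_on (gk_integrable ν x (by linarith)) hq measurableSet_Ioi
  intro t ht
  have h1 : Real.exp (-x * Real.cosh t) ≤ Real.exp (1 - x) * Real.exp (-1 * Real.cosh t) := by
    rw [← Real.exp_add]
    apply Real.exp_le_exp.2
    nlinarith [Real.one_le_cosh t]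
  calc Real.exp (-x * Real.cosh t) * Real.cosh (ν * t)
      ≤ (Real.exp (1 - x) * Real.exp (-1 * Real.cosh t)) * Real.cosh (ν * t) :=
        mul_le_mul_of_nonneg_right h1 (Real.cosh_pos _).le
    _ = Real.exp (1 - x) * (Real.exp (-1 * Real.cosh t) * Real.cosh (ν * t)) := by ring

lemma Gf_contOn (ν : ℝ) : ContinuousOn (Gf ν) (Ioi 0) := fun x hx =>
  (hasDerivAt_Gf ν x hx).continuousAt.continuousWithinAt

lemma Gf_sq_le (ν ν' x : ℝ) (hν : 0 ≤ ν) (hνν' : ν < ν') (hν'1 : ν' ≤ 1) (hx : 0 < x) :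
    Gf ν x ^ 2 ≤ (2 ^ ν' * ∫ t in Ioi (0:ℝ), Real.exp (-(ν' - ν) * t)) ^ 2
      * x ^ (1 - 2*ν') := by
  set K : ℝ := ∫ t in Ioi (0:ℝ), Real.exp (-(ν' - ν) * t) with hKdef
  have hK : 0 ≤ K := setIntegral_nonneg measurableSet_Ioi fun t _ => (Real.exp_pos _).le
  have hgk := gk_le_small ν ν' x hν hνν' hν'1 hx
  have hgk0 := gk_nonneg ν x hx
  have h1 : Gf ν x ^ 2 = x * gk ν x ^ 2 := by
    rw [Gf, mul_pow, Real.sq_sqrt hx.le]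
  have h2 : gk ν x ^ 2 ≤ ((x/2) ^ (-ν') * K) ^ 2 := by
    apply pow_le_pow_left₀ hgk0 hgk
  have h3 : ((x/2) ^ (-ν') * K) ^ 2 = (x/2) ^ (-(2*ν')) * K ^ 2 := by
    rw [mul_pow, ← Real.rpow_mul_natCast (by positivity : (0:ℝ) ≤ x/2) (-ν') 2]
    norm_num [mul_comm]
  have h4 : (x/2 : ℝ) ^ (-(2*ν')) = x ^ (-(2*ν')) * 2 ^ (2*ν') := by
    rw [Real.div_rpow hx.le (by norm_num : (0:ℝ) ≤ 2), div_eq_mul_inv, ← Real.rpow_neg (by norm_num : (0:ℝ) ≤ 2)]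
    ring_nf
  have h5 : x * x ^ (-(2*ν')) = x ^ (1 - 2*ν') := by
    rw [show (1 - 2*ν') = 1 + (-(2*ν')) by ring, Real.rpow_add hx, Real.rpow_one]
  calc Gf ν x ^ 2 = x * gk ν x ^ 2 := h1
    _ ≤ x * ((x/2) ^ (-ν') * K) ^ 2 := by
        exact mul_le_mul_of_nonneg_left h2 hx.le
    _ = (2 ^ ν' * K) ^ 2 * x ^ (1 - 2*ν') := by
        rw [h3, h4, ← h5, mul_pow, ← Real.rpow_mul_natCast (by norm_num : (0:ℝ) ≤ 2) ν' 2]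
        norm_num [mul_comm]
        ring

lemma Gf_sq_integrable (α : ℝ) (hα : α ∈ Ioo (-(1 / 2) : ℝ) (1 / 2)) :
    IntegrableOn (fun x => Gf (1/2 - α) x ^ 2 + Gf (1/2 + α) x ^ 2) (Ioi 0) := by
  obtain ⟨hα1, hα2⟩ := hα
  set ν₁ : ℝ := 1/2 - α with hν₁
  set ν₂ : ℝ := 1/2 + α with hν₂
  set ν' : ℝ := 3/4 + |α|/2 with hν'
  have habs : |α| < 1/2 := abs_lt.2 ⟨by linarith, hα2⟩
  have hν₁0 : 0 ≤ ν₁ := by rw [hν₁]; linarith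
  have hν₂0 : 0 ≤ ν₂ := by rw [hν₂]; linarith
  have hν₁ν' : ν₁ < ν' := by
    rw [hν₁, hν']; cases abs_cases α with
    | inl h => nlinarith [h.1, h.2]
    | inr h => nlinarith [h.1, h.2]
  have hν₂ν' : ν₂ < ν' := by
    rw [hν₂, hν']; cases abs_cases α with
    | inl h => nlinarith [h.1, h.2]
    | inr h => nlinarith [h.1, h.2]
  have hν'1 : ν' ≤ 1 := by rw [hν']; linarith
  have hcont : ContinuousOn (fun x => Gf ν₁ x ^ 2 + Gf ν₂ x ^ 2) (Ioi 0) :=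
    (((Gf_contOn ν₁).pow 2).add ((Gf_contOn ν₂).pow 2))
  have hnneg : ∀ x ∈ Ioi (0:ℝ), 0 ≤ Gf ν₁ x ^ 2 + Gf ν₂ x ^ 2 := fun x _ => by positivity
  rw [show Ioi (0:ℝ) = Ioc 0 1 ∪ Ioi 1 from (Ioc_union_Ioi_eq_Ioi zero_le_one).symm]
  apply IntegrableOn.union
  · -- near zero
    set K₁ : ℝ := ∫ t in Ioi (0:ℝ), Real.exp (-(ν' - ν₁) * t) with hK₁
    set K₂ : ℝ := ∫ t in Ioi (0:ℝ), Real.exp (-(ν' - ν₂) * t) with hK₂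
    set C : ℝ := (2 ^ ν' * K₁) ^ 2 + (2 ^ ν' * K₂) ^ 2 with hC
    have hmaj : IntegrableOn (fun x : ℝ => C * x ^ (1 - 2*ν')) (Ioc 0 1) := by
      have h := intervalIntegral.intervalIntegrable_rpow' (a := 0) (b := 1)
        (r := 1 - 2*ν') (by rw [hν']; linarith)
      rw [intervalIntegrable_iff_integrableOn_Ioc_of_le zero_le_one] at h
      exact h.const_mul C
    apply hmaj.mono' ((hcont.mono Ioc_subset_Ioi_self).aestronglyMeasurable measurableSet_Ioc)
    refine (ae_restrict_iff' measurableSet_Ioc).2 (ae_of_all _ fun x hx => ?_)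
    have hx0 : (0:ℝ) < x := hx.1
    rw [Real.norm_eq_abs, abs_of_nonneg (hnneg x hx0)]
    have b1 : Gf ν₁ x ^ 2 ≤ (2 ^ ν' * K₁) ^ 2 * x ^ (1 - 2*ν') := by
      rw [hK₁]; exact Gf_sq_le ν₁ ν' x hν₁0 hν₁ν' hν'1 hx0
    have b2 : Gf ν₂ x ^ 2 ≤ (2 ^ ν' * K₂) ^ 2 * x ^ (1 - 2*ν') := by
      rw [hK₂]; exact Gf_sq_le ν₂ ν' x hν₂0 hν₂ν' hν'1 hx0
    rw [hC, add_mul]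
    linarith [b1, b2]
  · -- at infinity
    set C₂ : ℝ := Real.exp 2 * (gk ν₁ 1 ^ 2 + gk ν₂ 1 ^ 2) with hC₂
    have hmaj : IntegrableOn (fun x : ℝ => C₂ * Real.exp (-x)) (Ioi 1) := by
      have h := (exp_neg_integrableOn_Ioi 1 one_pos).const_mul C₂
      simpa [neg_one_mul, IntegrableOn] using h
    apply hmaj.mono' ((hcont.mono (Ioi_subset_Ioi zero_le_one)).aestronglyMeasurable
      measurableSet_Ioi)
    refine (ae_restrict_iff' measurableSet_Ioi).2 (ae_of_all _ fun x hx => ?_)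
    have hx1 : (1:ℝ) ≤ x := le_of_lt hx
    have hx0 : (0:ℝ) < x := by linarith
    rw [Real.norm_eq_abs, abs_of_nonneg (hnneg x hx0)]
    have hb : ∀ ν : ℝ, Gf ν x ^ 2 ≤ Real.exp 2 * gk ν 1 ^ 2 * Real.exp (-x) := by
      intro ν
      have h1 : Gf ν x ^ 2 = x * gk ν x ^ 2 := by rw [Gf, mul_pow, Real.sq_sqrt hx0.le]
      have h2 : gk ν x ^ 2 ≤ (Real.exp (1-x) * gk ν 1) ^ 2 :=
        pow_le_pow_left₀ (gk_nonneg ν x hx0) (gk_le_large ν x hx1) 2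
      have h3 : x ≤ Real.exp x := by nlinarith [Real.add_one_le_exp x]
      have h4 : Real.exp x * Real.exp (2*(1-x)) = Real.exp 2 * Real.exp (-x) := by
        rw [← Real.exp_add, ← Real.exp_add]; ring_nf
      calc Gf ν x ^ 2 = x * gk ν x ^ 2 := h1
        _ ≤ Real.exp x * (Real.exp (1-x) * gk ν 1) ^ 2 :=
            mul_le_mul h3 h2 (by positivity) (Real.exp_pos _).le
        _ = Real.exp 2 * gk ν 1 ^ 2 * Real.exp (-x) := by
            rw [mul_pow, ← Real.exp_nat_mul]
            push_cast
            linear_combination (gk ν 1 ^ 2) * h4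
    have hb1 := hb ν₁
    have hb2 := hb ν₂
    rw [hC₂]
    have hexp : Real.exp 2 * (gk ν₁ 1 ^ 2 + gk ν₂ 1 ^ 2) * Real.exp (-x)
        = Real.exp 2 * gk ν₁ 1 ^ 2 * Real.exp (-x) + Real.exp 2 * gk ν₂ 1 ^ 2 * Real.exp (-x) := by
      ring
    rw [hexp]
    linarith [hb1, hb2]

lemma exists_sol (α : ℝ) (hα : α ∈ Ioo (-(1 / 2) : ℝ) (1 / 2)) :
    ∃ f₁ f₂ : ℝ → ℂ, MemDeficiency α f₁ f₂ ∧ ∃ x ∈ Ioi (0 : ℝ), (f₁ x ≠ 0 ∨ f₂ x ≠ 0) := by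
  set ν₁ : ℝ := 1/2 - α with hν₁
  set ν₂ : ℝ := 1/2 + α with hν₂
  set f₁ : ℝ → ℂ := fun x => ((Gf ν₁ x : ℝ) : ℂ) with hf₁def
  set f₂ : ℝ → ℂ := fun x => -Complex.I * ((Gf ν₂ x : ℝ) : ℂ) with hf₂def
  have hG1 : ∀ x ∈ Ioi (0:ℝ), HasDerivAt (Gf ν₁) (α/x * Gf ν₁ x - Gf ν₂ x) x := by
    intro x hx
    have h := hasDerivAt_Gf ν₁ x hx
    convert h using 2 <;> rw [hν₁] <;> ring_nf
    rw [hν₂]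
  have hG2 : ∀ x ∈ Ioi (0:ℝ), HasDerivAt (Gf ν₂) (-α/x * Gf ν₂ x - Gf ν₁ x) x := by
    intro x hx
    have h := hasDerivAt_Gf ν₂ x hx
    convert h using 2
    · rw [hν₂]; ring_nf
    · rw [hν₂, hν₁]; ring_nf
  have hd1 : ∀ x ∈ Ioi (0:ℝ),
      HasDerivAt f₁ (((α/x * Gf ν₁ x - Gf ν₂ x : ℝ) : ℂ)) x := fun x hx =>
    (hG1 x hx).ofReal_comp
  have hd2 : ∀ x ∈ Ioi (0:ℝ),
      HasDerivAt f₂ (-Complex.I * ((-α/x * Gf ν₂ x - Gf ν₁ x : ℝ) : ℂ)) x := fun x hx => by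
    exact ((hG2 x hx).ofReal_comp).const_mul (-Complex.I)
  have hcd : ∀ (f : ℝ → ℂ) (D : ℝ → ℂ), (∀ x ∈ Ioi (0:ℝ), HasDerivAt f (D x) x) →
      ContinuousOn D (Ioi 0) → ContDiffOn ℝ 1 f (Ioi 0) := by
    intro f D hD hDc
    have h1 : ContDiffOn ℝ (0+1) f (Ioi 0) := by
      refine (contDiffOn_succ_iff_deriv_of_isOpen isOpen_Ioi).2
        ⟨fun x hx => (hD x hx).differentiableAt.differentiableWithinAt, by simp, ?_⟩
      rw [contDiffOn_zero]
      exact ContinuousOn.congr hDc fun x hx => (hD x hx).deriv ▸ rfl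
    simpa using h1
  have hcont_inv : ContinuousOn (fun x : ℝ => α / x) (Ioi 0) :=
    continuousOn_const.div continuousOn_id fun x hx => ne_of_gt hx
  have hmem : MemDeficiency α f₁ f₂ := by
    refine ⟨?_, ?_, ?_, ?_⟩
    · refine hcd f₁ (fun x => ((α/x * Gf ν₁ x - Gf ν₂ x : ℝ) : ℂ)) hd1 ?_
      have hg : ContinuousOn (fun x : ℝ => α/x * Gf ν₁ x - Gf ν₂ x) (Ioi 0) :=
        (hcont_inv.mul (Gf_contOn ν₁)).sub (Gf_contOn ν₂)
      exact (Complex.continuous_ofReal.comp_continuousOn hg).congr fun x _ => rfl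
    · refine hcd f₂ (fun x => -Complex.I * ((-α/x * Gf ν₂ x - Gf ν₁ x : ℝ) : ℂ)) hd2 ?_
      apply continuousOn_const.mul
      have hg : ContinuousOn (fun x : ℝ => -α/x * Gf ν₂ x - Gf ν₁ x) (Ioi 0) :=
        ((continuousOn_const.div continuousOn_id fun x hx => ne_of_gt hx).mul
          (Gf_contOn ν₂)).sub (Gf_contOn ν₁)
      exact (Complex.continuous_ofReal.comp_continuousOn hg).congr fun x _ => rfl
    · have heq : (fun x => ‖f₁ x‖ ^ 2 + ‖f₂ x‖ ^ 2)
          = fun x => Gf ν₁ x ^ 2 + Gf ν₂ x ^ 2 := by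
        funext x
        simp only [hf₁def, hf₂def, norm_mul, norm_neg, Complex.norm_I, one_mul,
          Complex.norm_real, Real.norm_eq_abs, sq_abs]
      rw [heq]
      exact Gf_sq_integrable α hα
    · intro x hx
      have e1 := (hd1 x hx).deriv
      have e2 := (hd2 x hx).deriv
      constructor
      · rw [e2]
        simp only [hf₁def, hf₂def]
        push_cast
        ring
      · rw [e1]
        simp only [hf₁def, hf₂def]
        push_cast
        linear_combination ((Gf ν₂ x : ℂ)) * Complex.I_sq
  refine ⟨f₁, f₂, hmem, 1, mem_Ioi.2 one_pos, Or.inl ?_⟩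
  simp only [hf₁def]
  exact_mod_cast Complex.ofReal_ne_zero.2 (ne_of_gt (Gf_pos ν₁ 1 one_pos))

lemma mem_hasDerivAt (α : ℝ) {f₁ f₂ : ℝ → ℂ} (h : MemDeficiency α f₁ f₂) :
    ∀ x ∈ Ioi (0:ℝ), HasDerivAt f₁ (((α/x : ℝ):ℂ) * f₁ x - Complex.I * f₂ x) x
      ∧ HasDerivAt f₂ (Complex.I * f₁ x - ((α/x : ℝ):ℂ) * f₂ x) x := by
  intro x hx
  have hdf1 : DifferentiableAt ℝ f₁ x :=
    (h.1.differentiableOn one_ne_zero).differentiableAt (Ioi_mem_nhds hx)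
  have hdf2 : DifferentiableAt ℝ f₂ x :=
    (h.2.1.differentiableOn one_ne_zero).differentiableAt (Ioi_mem_nhds hx)
  have e := h.2.2.2 x hx
  have h1 : deriv f₁ x = ((α/x : ℝ):ℂ) * f₁ x - Complex.I * f₂ x := by
    linear_combination -e.2
  have h2 : deriv f₂ x = Complex.I * f₁ x - ((α/x : ℝ):ℂ) * f₂ x := by
    linear_combination e.1
  exact ⟨h1 ▸ hdf1.hasDerivAt, h2 ▸ hdf2.hasDerivAt⟩

/-- The clamped linear vector field for the system, Lipschitz for all times. -/
def vfield (α a : ℝ) : ℝ → ℂ × ℂ → ℂ × ℂ := fun t p =>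
  (((α / max t a : ℝ):ℂ) * p.1 - Complex.I * p.2,
    Complex.I * p.1 - ((α / max t a : ℝ):ℂ) * p.2)

lemma vfield_lipschitz (α a : ℝ) (ha : 0 < a) (t : ℝ) :
    LipschitzWith (⟨|α|/a + 1, by positivity⟩ : NNReal) (vfield α a t) := by
  apply LipschitzWith.of_dist_le_mul
  intro p q
  have hmax : a ≤ max t a := le_max_right t a
  have hmax0 : 0 < max t a := lt_of_lt_of_le ha hmax
  have hβ : ‖((α / max t a : ℝ):ℂ)‖ ≤ |α| / a := by
    rw [Complex.norm_real, Real.norm_eq_abs, abs_div, abs_of_pos hmax0]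
    exact div_le_div_of_nonneg_left (abs_nonneg α) ha hmax |>.trans_eq rfl
    
  have hd1 : dist p.1 q.1 ≤ dist p q := le_max_left _ _
  have hd2 : dist p.2 q.2 ≤ dist p q := le_max_right _ _
  have hdist : ∀ z w : ℂ, dist z w = ‖z - w‖ := fun z w => dist_eq_norm z w
  rw [Prod.dist_eq]
  have hb1 : dist (vfield α a t p).1 (vfield α a t q).1 ≤ (|α|/a + 1) * dist p q := by
    rw [dist_eq_norm]
    have : (vfield α a t p).1 - (vfield α a t q).1
        = ((α / max t a : ℝ):ℂ) * (p.1 - q.1) - Complex.I * (p.2 - q.2) := by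
      simp only [vfield]; ring
    rw [this]
    calc ‖((α / max t a : ℝ):ℂ) * (p.1 - q.1) - Complex.I * (p.2 - q.2)‖
        ≤ ‖((α / max t a : ℝ):ℂ) * (p.1 - q.1)‖ + ‖Complex.I * (p.2 - q.2)‖ := norm_sub_le _ _
      _ ≤ (|α|/a) * dist p q + 1 * dist p q := by
          rw [norm_mul, norm_mul, Complex.norm_I, one_mul]
          apply add_le_add
          · apply mul_le_mul hβ (by rw [← dist_eq_norm]; exact hd1) (norm_nonneg _)
              (by positivity)
          · rw [one_mul, ← dist_eq_norm]; exact hd2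
      _ = (|α|/a + 1) * dist p q := by ring
  have hb2 : dist (vfield α a t p).2 (vfield α a t q).2 ≤ (|α|/a + 1) * dist p q := by
    rw [dist_eq_norm]
    have : (vfield α a t p).2 - (vfield α a t q).2
        = Complex.I * (p.1 - q.1) - ((α / max t a : ℝ):ℂ) * (p.2 - q.2) := by
      simp only [vfield]; ring
    rw [this]
    calc ‖Complex.I * (p.1 - q.1) - ((α / max t a : ℝ):ℂ) * (p.2 - q.2)‖
        ≤ ‖Complex.I * (p.1 - q.1)‖ + ‖((α / max t a : ℝ):ℂ) * (p.2 - q.2)‖ := norm_sub_le _ _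
      _ ≤ 1 * dist p q + (|α|/a) * dist p q := by
          rw [norm_mul, norm_mul, Complex.norm_I, one_mul]
          apply add_le_add
          · rw [one_mul, ← dist_eq_norm]; exact hd1
          · apply mul_le_mul hβ (by rw [← dist_eq_norm]; exact hd2) (norm_nonneg _)
              (by positivity)
      _ = (|α|/a + 1) * dist p q := by ring
  exact max_le hb1 hb2

/-- A solution of the system vanishing at one point of `(0,∞)` vanishes identically. -/
lemma sol_vanish (α : ℝ) {p q : ℝ → ℂ}
    (hp : ∀ x ∈ Ioi (0:ℝ), HasDerivAt p (((α/x : ℝ):ℂ) * p x - Complex.I * q x) x)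
    (hq : ∀ x ∈ Ioi (0:ℝ), HasDerivAt q (Complex.I * p x - ((α/x : ℝ):ℂ) * q x) x)
    {x₀ : ℝ} (hx₀ : 0 < x₀) (h0p : p x₀ = 0) (h0q : q x₀ = 0) :
    ∀ x ∈ Ioi (0:ℝ), p x = 0 ∧ q x = 0 := by
  intro x hx
  set a : ℝ := min x x₀ / 2 with hadef
  have ha : 0 < a := by
    rw [hadef]
    exact div_pos (lt_min hx.out hx₀) two_pos
  set b : ℝ := max x x₀ + 1 with hbdef
  have hxab : x ∈ Ioo a b := by
    constructor
    · calc a ≤ x/2 := by apply div_le_div_of_nonneg_right (min_le_left _ _); norm_num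
        _ < x := by linarith [hx.out]
    · calc x ≤ max x x₀ := le_max_left _ _
        _ < b := by rw [hbdef]; linarith
  have hx₀ab : x₀ ∈ Ioo a b := by
    constructor
    · calc a ≤ x₀/2 := by apply div_le_div_of_nonneg_right (min_le_right _ _); norm_num
        _ < x₀ := by linarith
    · calc x₀ ≤ max x x₀ := le_max_right _ _
        _ < b := by rw [hbdef]; linarith
  have hsub : Ioo a b ⊆ Ioi (0:ℝ) := fun y hy => lt_trans ha hy.1
  have hmaxeq : ∀ y ∈ Ioo a b, max y a = y := fun y hy => max_eq_left hy.1.le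
  have hu : ∀ t ∈ Ioo a b,
      HasDerivAt (fun y => (p y, q y)) (vfield α a t ((fun y => (p y, q y)) t)) t
        ∧ (fun y => (p y, q y)) t ∈ (univ : Set (ℂ × ℂ)) := by
    intro t ht
    refine ⟨?_, mem_univ _⟩
    have h1 := (hp t (hsub ht)).prodMk (hq t (hsub ht))
    have : vfield α a t (p t, q t)
        = (((α/t : ℝ):ℂ) * p t - Complex.I * q t,
            Complex.I * p t - ((α/t : ℝ):ℂ) * q t) := by
      simp only [vfield, hmaxeq t ht]
    rw [this]
    exact h1
  have hzero : ∀ t ∈ Ioo a b,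
      HasDerivAt (fun _ : ℝ => ((0:ℂ), (0:ℂ))) (vfield α a t ((0:ℂ),(0:ℂ))) t
        ∧ ((0:ℂ),(0:ℂ)) ∈ (univ : Set (ℂ × ℂ)) := by
    intro t _
    refine ⟨?_, mem_univ _⟩
    have : vfield α a t ((0:ℂ),(0:ℂ)) = ((0:ℂ),(0:ℂ)) := by
      simp [vfield]
    rw [this]
    exact hasDerivAt_const _ _
  have hlip : ∀ t, LipschitzOnWith (⟨|α|/a + 1, by positivity⟩ : NNReal) (vfield α a t)
      ((fun _ => univ : ℝ → Set (ℂ × ℂ)) t) := fun t =>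
    (vfield_lipschitz α a ha t).lipschitzOnWith
  have heq0 : (fun y => (p y, q y)) x₀ = (fun _ : ℝ => ((0:ℂ),(0:ℂ))) x₀ := by
    simp [h0p, h0q]
  have := ODE_solution_unique_of_mem_Ioo (fun t _ => hlip t) hx₀ab hu hzero heq0 hxab
  simp only [Prod.mk.injEq] at this
  exact ⟨this.1, this.2⟩

lemma wronskian_zero (α : ℝ) {f₁ f₂ g₁ g₂ : ℝ → ℂ}
    (hf : MemDeficiency α f₁ f₂) (hg : MemDeficiency α g₁ g₂) :
    ∀ x ∈ Ioi (0:ℝ), f₁ x * g₂ x - f₂ x * g₁ x = 0 := by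
  set W : ℝ → ℂ := fun x => f₁ x * g₂ x - f₂ x * g₁ x with hW
  have hW' : ∀ x ∈ Ioi (0:ℝ), HasDerivAt W 0 x := by
    intro x hx
    obtain ⟨hf1, hf2⟩ := mem_hasDerivAt α hf x hx
    obtain ⟨hg1, hg2⟩ := mem_hasDerivAt α hg x hx
    have h := ((hf1.mul hg2).sub (hf2.mul hg1))
    refine h.congr_deriv ?_
    ring
  have hconst : ∀ y z : ℝ, 0 < y → y ≤ z → W z = W y := by
    intro y z hy hyz
    have hcont : ContinuousOn W (Icc y z) := by
      intro u hu
      exact (hW' u (lt_of_lt_of_le hy hu.1)).continuousAt.continuousWithinAt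
    have hder : ∀ u ∈ Ico y z, HasDerivWithinAt W 0 (Ici u) u := fun u hu =>
      (hW' u (lt_of_lt_of_le hy hu.1)).hasDerivWithinAt
    exact constant_of_has_deriv_right_zero hcont hder z ⟨hyz, le_rfl⟩
  have hWx : ∀ x ∈ Ioi (0:ℝ), W x = W 1 := by
    intro x hx
    rcases le_total x 1 with h | h
    · exact (hconst x 1 hx.out h).symm
    · exact hconst 1 x one_pos h
  -- the constant is zero because W is dominated by an integrable function
  set m : ℝ := ‖W 1‖ with hm
  have hbound : ∀ x ∈ Ioi (0:ℝ),
      m ≤ 1/2 * ((‖f₁ x‖ ^ 2 + ‖f₂ x‖ ^ 2) + (‖g₁ x‖ ^ 2 + ‖g₂ x‖ ^ 2)) := by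
    intro x hx
    rw [hm, ← hWx x hx]
    calc ‖W x‖ ≤ ‖f₁ x * g₂ x‖ + ‖f₂ x * g₁ x‖ := norm_sub_le _ _
      _ = ‖f₁ x‖ * ‖g₂ x‖ + ‖f₂ x‖ * ‖g₁ x‖ := by rw [norm_mul, norm_mul]
      _ ≤ 1/2 * ((‖f₁ x‖ ^ 2 + ‖f₂ x‖ ^ 2) + (‖g₁ x‖ ^ 2 + ‖g₂ x‖ ^ 2)) := by
          nlinarith [sq_nonneg (‖f₁ x‖ - ‖g₂ x‖), sq_nonneg (‖f₂ x‖ - ‖g₁ x‖)]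
  have hint : IntegrableOn (fun x : ℝ =>
      1/2 * ((‖f₁ x‖ ^ 2 + ‖f₂ x‖ ^ 2) + (‖g₁ x‖ ^ 2 + ‖g₂ x‖ ^ 2))) (Ioi 0) :=
    (hf.2.2.1.add hg.2.2.1).const_mul (1/2)
  have hconst_int : IntegrableOn (fun _ : ℝ => m) (Ioi 0) := by
    apply hint.mono' aestronglyMeasurable_const
    refine (ae_restrict_iff' measurableSet_Ioi).2 (ae_of_all _ fun x hx => ?_)
    rw [Real.norm_eq_abs, abs_of_nonneg (norm_nonneg _)]
    exact hbound x hx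
  have hm0 : m = 0 := by
    rcases (integrable_const_iff).1 hconst_int with h | h
    · exact h
    · exfalso
      exact (measure_ne_top (volume.restrict (Ioi (0:ℝ))) univ)
        (by rw [Measure.restrict_apply_univ, Real.volume_Ioi])
  intro x hx
  rw [show f₁ x * g₂ x - f₂ x * g₁ x = W x from rfl, hWx x hx]
  exact norm_eq_zero.1 hm0

/-- One-dimensionality of the deficiency space on the half-line in the subcritical range
(core of Proposition 3.4 (iii)): for `α ∈ (−1/2, 1/2)` the deficiency space `S` contains a
nonzero element, and any two elements of `S` are linearly dependent over `ℂ`. -/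
theorem deficiency_one_dimensional_halfline (α : ℝ) (hα : α ∈ Ioo (-(1 / 2) : ℝ) (1 / 2)) :
    (∃ f₁ f₂ : ℝ → ℂ, MemDeficiency α f₁ f₂ ∧ ∃ x ∈ Ioi (0 : ℝ), (f₁ x ≠ 0 ∨ f₂ x ≠ 0))
    ∧ ∀ f₁ f₂ g₁ g₂ : ℝ → ℂ, MemDeficiency α f₁ f₂ → MemDeficiency α g₁ g₂ →
        ∃ c d : ℂ, ¬(c = 0 ∧ d = 0) ∧
          ∀ x ∈ Ioi (0 : ℝ), c * f₁ x + d * g₁ x = 0 ∧ c * f₂ x + d * g₂ x = 0 := by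
  refine ⟨exists_sol α hα, ?_⟩
  intro f₁ f₂ g₁ g₂ hf hg
  by_cases hgz : ∀ x ∈ Ioi (0:ℝ), g₁ x = 0 ∧ g₂ x = 0
  · refine ⟨0, 1, by simp, fun x hx => ?_⟩
    simp [(hgz x hx).1, (hgz x hx).2]
  · push_neg at hgz
    obtain ⟨x₀, hx₀, hgne⟩ := hgz
    have hW := wronskian_zero α hf hg x₀ hx₀
    -- choose the proportionality constant
    obtain ⟨c, hc1, hc2⟩ : ∃ c : ℂ, f₁ x₀ - c * g₁ x₀ = 0 ∧ f₂ x₀ - c * g₂ x₀ = 0 := by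
      by_cases hg1 : g₁ x₀ = 0
      · have hg2 : g₂ x₀ ≠ 0 := hgne hg1
        refine ⟨f₂ x₀ / g₂ x₀, ?_, ?_⟩
        · rw [hg1] at hW ⊢
          have : f₁ x₀ * g₂ x₀ = 0 := by linear_combination hW
          rcases mul_eq_zero.1 this with h | h
          · simp [h]
          · exact absurd h hg2
        · field_simp
          ring
      · refine ⟨f₁ x₀ / g₁ x₀, ?_, ?_⟩
        · field_simp
          ring
        · field_simp
          linear_combination -hW
    have hfd := mem_hasDerivAt α hf
    have hgd := mem_hasDerivAt α hg
    set p : ℝ → ℂ := fun x => f₁ x - c * g₁ x with hp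
    set q : ℝ → ℂ := fun x => f₂ x - c * g₂ x with hq
    have hpd : ∀ x ∈ Ioi (0:ℝ), HasDerivAt p (((α/x : ℝ):ℂ) * p x - Complex.I * q x) x := by
      intro x hx
      have h := (hfd x hx).1.sub (((hgd x hx).1).const_mul c)
      refine h.congr_deriv ?_
      simp only [hp, hq]
      ring
    have hqd : ∀ x ∈ Ioi (0:ℝ), HasDerivAt q (Complex.I * p x - ((α/x : ℝ):ℂ) * q x) x := by
      intro x hx
      have h := (hfd x hx).2.sub (((hgd x hx).2).const_mul c)
      refine h.congr_deriv ?_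
      simp only [hp, hq]
      ring
    have hvanish := sol_vanish α hpd hqd hx₀.out hc1 hc2
    refine ⟨1, -c, by simp, fun x hx => ?_⟩
    obtain ⟨h1, h2⟩ := hvanish x hx
    constructor
    · linear_combination h1
    · linear_combination h2

end
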